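/- Let 𝕊 be a quantum system with policy ↝. Suppose that for each agent a ∈ A there is an equivalence relation ∼ₐ on reachable density operators satisfying: (step consistency) if ρ ∼ₐ σ then 𝓔_{b,c}(ρ) ∼ₐ 𝓔_{b,c}(σ) for all b ∈ A and c ∈ C; and (local respect of ↝) if ¬(b ↝ a) then ρ ∼ₐ 𝓔_{b,c}(ρ) for all c ∈ C and all reachable ρ. Then for every agent a ∈ A and every finite sequence α over A×C, 𝓔_α(ρ0) ∼ₐ 𝓔_{purge_{∇a}(α)}(ρ0). -/

import Mathlib

open scoped Classical ComplexOrder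
open Matrix Kronecker

noncomputable section

/-- A density operator: positive semidefinite with trace 1. -/
def IsDensity {d : Type} [Fintype d] [DecidableEq d] (ρ : Matrix d d ℂ) : Prop :=
  ρ.PosSemidef ∧ ρ.trace = 1

/-- A super-operator: a linear, positive, trace-preserving map on matrices. -/
def IsSuperOp {d : Type} [Fintype d] [DecidableEq d]
    (F : Matrix d d ℂ → Matrix d d ℂ) : Prop :=
  IsLinearMap ℂ F ∧ (∀ ρ : Matrix d d ℂ, ρ.PosSemidef → (F ρ).PosSemidef) ∧
    (∀ ρ : Matrix d d ℂ, (F ρ).trace = ρ.trace)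

/-- A finite family of matrices (the data of a measurement). -/
structure PMeas (d : Type) where
  m : ℕ
  E : Fin m → Matrix d d ℂ

/-- The family is a POVM: positive semidefinite elements summing to the identity. -/
def PMeas.IsPOVM {d : Type} [Fintype d] [DecidableEq d] (P : PMeas d) : Prop :=
  (∀ i, (P.E i).PosSemidef) ∧ ∑ i, P.E i = 1

/-- The distance between outcome distributions of a measurement on two states. -/
def dE {d : Type} [Fintype d] (P : PMeas d) (ρ σ : Matrix d d ℂ) : ℝ :=
  (1 / 2) * ∑ i, ‖(P.E i * ρ).trace - (P.E i * σ).trace‖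

/-- The measurement pseudo-distance induced by a set of measurements. -/
def dM {d : Type} [Fintype d] (M : Set (PMeas d)) (ρ σ : Matrix d d ℂ) : ℝ :=
  sSup { x | ∃ P ∈ M, x = dE P ρ σ }

/-- A quantum system: initial state, agents, commands, super-operators, measurements. -/
structure QSystem (Agent Cmd d : Type) where
  ρ0 : Matrix d d ℂ
  A : Set Agent
  C : Set Cmd
  Ecmd : Agent → Cmd → Matrix d d ℂ → Matrix d d ℂ
  M : Agent → Set (PMeas d)

/-- Well-formedness: the initial state is a density operator, commands act as
super-operators, and agents measure with POVMs. -/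
def QSystem.WellFormed {Agent Cmd d : Type} [Fintype d] [DecidableEq d]
    (S : QSystem Agent Cmd d) : Prop :=
  IsDensity S.ρ0 ∧ (∀ a ∈ S.A, ∀ c ∈ S.C, IsSuperOp (S.Ecmd a c)) ∧
    (∀ a ∈ S.A, ∀ P ∈ S.M a, P.IsPOVM)

/-- Execution of a finite action sequence (composition of super-operators, in order). -/
def QSystem.run {Agent Cmd d : Type} (S : QSystem Agent Cmd d)
    (α : List (Agent × Cmd)) (ρ : Matrix d d ℂ) : Matrix d d ℂ :=
  α.foldl (fun τ p => S.Ecmd p.1 p.2 τ) ρ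

/-- A sequence over A × C. -/
def QSystem.Valid {Agent Cmd d : Type} (S : QSystem Agent Cmd d)
    (α : List (Agent × Cmd)) : Prop :=
  ∀ p ∈ α, p.1 ∈ S.A ∧ p.2 ∈ S.C

/-- `purge G D α` deletes from `α` every pair `(a, c)` with `a ∈ G` and `c ∈ D`. -/
def purge {Agent Cmd : Type} (G : Set Agent) (D : Set Cmd) :
    List (Agent × Cmd) → List (Agent × Cmd)
  | [] => []
  | p :: rest => if p.1 ∈ G ∧ p.2 ∈ D then purge G D rest else p :: purge G D rest

/-- A reachable density operator. -/
def QSystem.Reachable {Agent Cmd d : Type} (S : QSystem Agent Cmd d)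
    (ρ : Matrix d d ℂ) : Prop :=
  ∃ α, S.Valid α ∧ S.run α S.ρ0 = ρ

/-- `∇ a`: the set of agents from which information may not flow to `a`. -/
def nabla {Agent : Type} (pol : Agent → Agent → Prop) (a : Agent) : Set Agent :=
  { b | ¬ pol b a }

/-- The security degree `K(𝕊,↝)`. -/
def Kdeg {Agent Cmd d : Type} [Fintype d] (S : QSystem Agent Cmd d)
    (pol : Agent → Agent → Prop) : ℝ :=
  sSup { x | ∃ a ∈ S.A, ∃ α, S.Valid α ∧
    x = dM (S.M a) (S.run α S.ρ0) (S.run (purge (nabla pol a) Set.univ α) S.ρ0) }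

/-- The `t`-bounded security degree `K_t(𝕊,↝)`. -/
def Kt {Agent Cmd d : Type} [Fintype d] (S : QSystem Agent Cmd d)
    (pol : Agent → Agent → Prop) (t : ℕ) : ℝ :=
  sSup { x | ∃ a ∈ S.A, ∃ α, S.Valid α ∧ α.length ≤ t ∧
    x = dM (S.M a) (S.run α S.ρ0) (S.run (purge (nabla pol a) Set.univ α) S.ρ0) }

/-- The interference degree `Int(G₁, D | G₂)`. -/
def IntDeg {Agent Cmd d : Type} [Fintype d] (S : QSystem Agent Cmd d)
    (G1 : Set Agent) (D : Set Cmd) (G2 : Set Agent) : ℝ :=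
  sSup { x | ∃ a ∈ G2, ∃ α, S.Valid α ∧
    x = dM (S.M a) (S.run α S.ρ0) (S.run (purge G1 D α) S.ρ0) }

/-- The positive semidefinite square root (as defined in the older Mathlib). -/
def Matrix.PosSemidef.sqrt {n : Type} [Fintype n] [DecidableEq n] {𝕜 : Type} [RCLike 𝕜]
    {A : Matrix n n 𝕜} (hA : A.PosSemidef) : Matrix n n 𝕜 :=
  hA.1.eigenvectorUnitary.1 * diagonal ((↑) ∘ (√·) ∘ hA.1.eigenvalues) *
  (star hA.1.eigenvectorUnitary : Matrix n n 𝕜)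

/-- Trace distance `d(ρ,σ) = (1/2)·tr √((ρ−σ)†(ρ−σ))`. -/
def traceDist {d : Type} [Fintype d] [DecidableEq d] (ρ σ : Matrix d d ℂ) : ℝ :=
  (1 / 2) * ((Matrix.posSemidef_conjTranspose_mul_self (ρ - σ)).sqrt.trace).re

end
noncomputable section

/-- If each agent has an equivalence relation on reachable density operators which is
step consistent and locally respects the policy, then for every agent `a ∈ A` and every
finite sequence `α` over `A × C`, `𝓔_α(ρ0) ∼ₐ 𝓔_{purge_{∇a}(α)}(ρ0)`. -/
theorem unwinding_relates_purged {Agent Cmd d : Type} [Fintype d] [DecidableEq d] [Nonempty d]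
    (S : QSystem Agent Cmd d) (hS : S.WellFormed)
    (pol : Agent → Agent → Prop) (hpol : ∀ a ∈ S.A, pol a a)
    (sim : Agent → Matrix d d ℂ → Matrix d d ℂ → Prop)
    (hrefl : ∀ a ∈ S.A, ∀ ρ, S.Reachable ρ → sim a ρ ρ)
    (hsymm : ∀ a ∈ S.A, ∀ ρ σ, S.Reachable ρ → S.Reachable σ →
      sim a ρ σ → sim a σ ρ)
    (htrans : ∀ a ∈ S.A, ∀ ρ σ τ, S.Reachable ρ → S.Reachable σ → S.Reachable τ →
      sim a ρ σ → sim a σ τ → sim a ρ τ)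
    (hstep : ∀ a ∈ S.A, ∀ b ∈ S.A, ∀ c ∈ S.C, ∀ ρ σ, S.Reachable ρ → S.Reachable σ →
      sim a ρ σ → sim a (S.Ecmd b c ρ) (S.Ecmd b c σ))
    (hlocal : ∀ a ∈ S.A, ∀ b ∈ S.A, ¬ pol b a → ∀ c ∈ S.C, ∀ ρ, S.Reachable ρ →
      sim a ρ (S.Ecmd b c ρ)) :
    ∀ a ∈ S.A, ∀ α : List (Agent × Cmd), S.Valid α →
      sim a (S.run α S.ρ0) (S.run (purge (nabla pol a) Set.univ α) S.ρ0) := by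
  intro a ha α hα
  -- basic facts
  have run_append : ∀ (β γ : List (Agent × Cmd)) (ρ : Matrix d d ℂ),
      S.run (β ++ γ) ρ = S.run γ (S.run β ρ) := by
    intro β γ ρ; simp [QSystem.run, List.foldl_append]
  have reach_run : ∀ (β : List (Agent × Cmd)) (ρ : Matrix d d ℂ),
      S.Valid β → S.Reachable ρ → S.Reachable (S.run β ρ) := by
    rintro β ρ hβ ⟨γ, hγ, rfl⟩
    exact ⟨γ ++ β, fun p hp => (List.mem_append.1 hp).elim (hγ p) (hβ p),
      run_append γ β S.ρ0⟩
  have valid_purge : ∀ (β : List (Agent × Cmd)), S.Valid β →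
      S.Valid (purge (nabla pol a) Set.univ β) := by
    intro β hβ
    induction β with
    | nil => intro p hp; simp [purge] at hp
    | cons q rest ih =>
      have hrest : S.Valid rest := fun p hp => hβ p (List.mem_cons_of_mem _ hp)
      intro p hp
      by_cases h : q.1 ∈ nabla pol a ∧ q.2 ∈ (Set.univ : Set Cmd)
      · rw [purge, if_pos h] at hp; exact ih hrest p hp
      · rw [purge, if_neg h] at hp
        rcases List.mem_cons.1 hp with rfl | hp
        · exact hβ p (List.mem_cons_self)
        · exact ih hrest p hp
  -- sim is preserved along any valid run
  have sim_run : ∀ (β : List (Agent × Cmd)), S.Valid β →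
      ∀ ρ σ, S.Reachable ρ → S.Reachable σ → sim a ρ σ →
        sim a (S.run β ρ) (S.run β σ) := by
    intro β
    induction β with
    | nil => intro _ ρ σ _ _ h; exact h
    | cons q rest ih =>
      intro hβ ρ σ hρ hσ h
      have hq := hβ q (List.mem_cons_self)
      have hrest : S.Valid rest := fun p hp => hβ p (List.mem_cons_of_mem _ hp)
      have hvq : S.Valid [q] := by
        intro p hp; rcases List.mem_singleton.1 hp with rfl; exact hq
      have h1 : S.Reachable (S.Ecmd q.1 q.2 ρ) := by
        have := reach_run [q] ρ hvq hρ; simpa [QSystem.run] using this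
      have h2 : S.Reachable (S.Ecmd q.1 q.2 σ) := by
        have := reach_run [q] σ hvq hσ; simpa [QSystem.run] using this
      have := hstep a ha q.1 hq.1 q.2 hq.2 ρ σ hρ hσ h
      exact ih hrest _ _ h1 h2 this
  -- main induction, generalizing the start state
  suffices H : ∀ (β : List (Agent × Cmd)), S.Valid β → ∀ ρ, S.Reachable ρ →
      sim a (S.run β ρ) (S.run (purge (nabla pol a) Set.univ β) ρ) by
    exact H α hα S.ρ0 ⟨[], by intro p hp; simp at hp, rfl⟩
  intro β
  induction β with
  | nil =>
    intro _ ρ hρ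
    simpa [purge, QSystem.run] using hrefl a ha ρ hρ
  | cons q rest ih =>
    intro hβ ρ hρ
    have hq := hβ q (List.mem_cons_self)
    have hrest : S.Valid rest := fun p hp => hβ p (List.mem_cons_of_mem _ hp)
    have hvq : S.Valid [q] := by
      intro p hp; rcases List.mem_singleton.1 hp with rfl; exact hq
    have hEρ : S.Reachable (S.Ecmd q.1 q.2 ρ) := by
      have := reach_run [q] ρ hvq hρ; simpa [QSystem.run] using this
    by_cases h : q.1 ∈ nabla pol a
    · -- purged step
      have hpurge : purge (nabla pol a) Set.univ (q :: rest)
          = purge (nabla pol a) Set.univ rest := by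
        rw [purge, if_pos ⟨h, Set.mem_univ _⟩]
      rw [hpurge]
      have hloc : sim a ρ (S.Ecmd q.1 q.2 ρ) := hlocal a ha q.1 hq.1 h q.2 hq.2 ρ hρ
      have hloc' : sim a (S.run rest ρ) (S.run rest (S.Ecmd q.1 q.2 ρ)) :=
        sim_run rest hrest ρ _ hρ hEρ hloc
      have hsym : sim a (S.run rest (S.Ecmd q.1 q.2 ρ)) (S.run rest ρ) :=
        hsymm a ha _ _ (reach_run rest ρ hrest hρ) (reach_run rest _ hrest hEρ) hloc'
      have hIH := ih hrest ρ hρ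
      have hr1 : S.Reachable (S.run rest (S.Ecmd q.1 q.2 ρ)) := reach_run rest _ hrest hEρ
      have hr2 : S.Reachable (S.run rest ρ) := reach_run rest ρ hrest hρ
      have hr3 : S.Reachable (S.run (purge (nabla pol a) Set.univ rest) ρ) :=
        reach_run _ ρ (valid_purge rest hrest) hρ
      have : sim a (S.run rest (S.Ecmd q.1 q.2 ρ))
          (S.run (purge (nabla pol a) Set.univ rest) ρ) :=
        htrans a ha _ _ _ hr1 hr2 hr3 hsym hIH
      simpa [QSystem.run] using this
    · -- kept step
      have hpurge : purge (nabla pol a) Set.univ (q :: rest)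
          = q :: purge (nabla pol a) Set.univ rest := by
        rw [purge, if_neg (by tauto)]
      rw [hpurge]
      have := ih hrest (S.Ecmd q.1 q.2 ρ) hEρ
      simpa [QSystem.run] using this

end
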